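/- Let $a_1,\ldots,a_k > 0$ with $c = \sum_{j=1}^k a_j$, let $M_{ij} = c\,\delta_{ij} - a_i$, and suppose $Mx = b$ has a solution. Then there exists a unique $x \in \mathbb{R}_{\geq 0}^k$ with $Mx = b$ and $x_i = 0$ for some $i \in [k]$. -/

import Mathlib

/-- Lemma 1: assuming Mx = b is solvable, there is a unique
nonnegative solution having at least one zero coordinate. -/
theorem stmt4 (k : ℕ) (hk : 0 < k) (a : Fin k → ℝ) (ha : ∀ i, 0 < a i)
    (c : ℝ) (hc : c = ∑ j, a j)
    (M : Matrix (Fin k) (Fin k) ℝ)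
    (hM : ∀ i j, M i j = (if i = j then c else 0) - a i)
    (b : Fin k → ℝ) (hb : ∃ x, M.mulVec x = b) :
    ∃! x : Fin k → ℝ, (∀ i, 0 ≤ x i) ∧ (∃ i, x i = 0) ∧ M.mulVec x = b := by
  have hne : Nonempty (Fin k) := ⟨⟨0, hk⟩⟩
  have hcpos : 0 < c := by
    rw [hc]
    exact Finset.sum_pos (fun i _ => ha i) Finset.univ_nonempty
  have key : ∀ x : Fin k → ℝ, ∀ i, M.mulVec x i = c * x i - a i * ∑ j, x j := by
    intro x i
    have h : ∀ j, M i j * x j = (if i = j then c * x j else 0) - a i * x j := by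
      intro j; rw [hM]; split <;> ring
    simp [Matrix.mulVec, dotProduct, h, Finset.sum_sub_distrib,
      Finset.mul_sum]
  obtain ⟨x0, hx0⟩ := hb
  obtain ⟨i0, -, hi0⟩ := Finset.exists_min_image Finset.univ
    (fun i => x0 i / a i) Finset.univ_nonempty
  set t := x0 i0 / a i0 with ht
  set x := fun i => x0 i - t * a i with hxdef
  have hnn : ∀ i, 0 ≤ x i := by
    intro i
    have h1 : t ≤ x0 i / a i := hi0 i (Finset.mem_univ i)
    have h2 : t * a i ≤ (x0 i / a i) * a i :=
      mul_le_mul_of_nonneg_right h1 (ha i).le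
    rw [div_mul_cancel₀ _ (ha i).ne'] at h2
    simpa [hxdef, sub_nonneg] using h2
  have hzero : x i0 = 0 := by
    simp [hxdef, ht, div_mul_cancel₀ _ (ha i0).ne']
  have hsum : ∀ i, M.mulVec x i = b i := by
    intro i
    have hsx : ∑ j, x j = (∑ j, x0 j) - t * ∑ j, a j := by
      simp [hxdef, Finset.sum_sub_distrib, Finset.mul_sum]
    have hb' : b i = c * x0 i - a i * ∑ j, x0 j := by rw [← hx0, key]
    rw [key, hsx, hb']
    simp only [hxdef]
    rw [hc]
    ring
  refine ⟨x, ⟨hnn, ⟨i0, hzero⟩, funext hsum⟩, ?_⟩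
  rintro y ⟨hynn, ⟨iy, hyz⟩, hyb⟩
  -- y i = x i + a i * d, d := (∑ y - ∑ x)/c
  set d := ((∑ j, y j) - ∑ j, x j) / c with hd
  have hyx : ∀ i, y i = x i + a i * d := by
    intro i
    have h1 : c * y i - a i * ∑ j, y j = c * x i - a i * ∑ j, x j := by
      rw [← key, ← key, hyb, funext hsum]
    rw [hd]; field_simp
    linarith [h1]
  rcases lt_trichotomy d 0 with h | h | h
  · exfalso
    have : 0 < x iy := by
      have := hyx iy
      nlinarith [ha iy, hyz]
    have hx2 : ∀ i, 0 < y i → True := fun _ _ => trivial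
    -- x i0 = 0 gives y i0 < 0
    have h0 : y i0 = a i0 * d := by rw [hyx i0, hzero]; ring
    have : y i0 < 0 := by rw [h0]; exact mul_neg_of_pos_of_neg (ha i0) h
    linarith [hynn i0]
  · funext i
    rw [hyx i, h]; ring
  · exfalso
    have : 0 < y iy := by
      have := hyx iy
      nlinarith [ha iy, hnn iy]
    linarith [hyz ▸ this]
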